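/- arXiv:1404.1405 — 8 statements merged into one kernel-verified Lean document; each statement's English description precedes it below -/
import Mathlib

section
/- Let 1/2 ≤ α < 1, 0 ≤ δ < 1, G row-stochastic, W = ((1-α)/(2α))G, and v = (I - δWᵀ)⁻¹𝟏. Then the matrix I - δWᵀ is invertible and Σ_{i=1}^n v_i = 2αn/(2α - δ(1-α)). -/
open Matrix BigOperators

attribute [local instance] Matrix.linftyOpNormedRing Matrix.linftyOpNormedAlgebra

lemma aux_isUnit {n : ℕ} (A : Matrix (Fin n) (Fin n) ℝ) (c : ℝ) (hc0 : 0 ≤ c) (hc1 : c < 1)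
    (hrow : ∀ i, ∑ j, ‖A i j‖₊ ≤ Real.toNNReal c) : IsUnit (1 - A).det := by
  have hnorm : ‖A‖ < 1 := by
    have h1 : ‖A‖₊ ≤ Real.toNNReal c := by
      rw [Matrix.linfty_opNNNorm_def]
      exact Finset.sup_le fun i _ => hrow i
    calc ‖A‖ ≤ c := by
          have := (NNReal.coe_le_coe.mpr h1)
          simpa [Real.coe_toNNReal c hc0] using this
      _ < 1 := hc1
  exact (Matrix.isUnit_iff_isUnit_det _).mp (Units.oneSub A hnorm).isUnit

/-- Invertibility of `I - δWᵀ` and the total centrality `∑ vᵢ = 2αn/(2α - δ(1-α))`. -/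
theorem stmt_3 (n : ℕ) (α δ : ℝ) (hα : 1/2 ≤ α) (hα1 : α < 1)
    (hδ0 : 0 ≤ δ) (hδ1 : δ < 1)
    (G : Matrix (Fin n) (Fin n) ℝ)
    (hG0 : ∀ i j, 0 ≤ G i j) (hG1 : ∀ i, ∑ j, G i j = 1)
    (W : Matrix (Fin n) (Fin n) ℝ) (hW : W = ((1 - α)/(2*α)) • G)
    (v : Fin n → ℝ) (hv : v = (1 - δ • Wᵀ)⁻¹ *ᵥ (fun _ => 1)) :
    IsUnit (1 - δ • Wᵀ).det ∧ ∑ i, v i = 2*α*n / (2*α - δ*(1 - α)) := by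
  have hα0 : (0:ℝ) < α := lt_of_lt_of_le (by norm_num) hα
  set c : ℝ := (1 - α)/(2*α) with hc
  have hc0 : 0 ≤ c := div_nonneg (by linarith) (by linarith)
  have hc1 : c < 1 := by
    rw [hc, div_lt_one (by linarith)]; linarith
  have hdc0 : 0 ≤ δ * c := mul_nonneg hδ0 hc0
  have hdc1 : δ * c < 1 :=
    lt_of_le_of_lt (mul_le_of_le_one_left hc0 hδ1.le) hc1
  -- row sums of W
  have hWrow : ∀ i, ∑ j, W i j = c := by
    intro i
    simp [hW, ← Finset.mul_sum, hG1 i]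
  have hW0 : ∀ i j, 0 ≤ W i j := by
    intro i j; rw [hW]; exact mul_nonneg hc0 (hG0 i j)
  -- invertibility of 1 - δ • W
  have hdet : IsUnit (1 - δ • W).det := by
    apply aux_isUnit _ (δ * c) hdc0 hdc1
    intro i
    have : ∑ j, ‖(δ • W) i j‖₊ = Real.toNNReal (δ * c) := by
      have h1 : ∀ j, ‖(δ • W) i j‖₊ = Real.toNNReal (δ * W i j) := by
        intro j
        have h0 : 0 ≤ δ * W i j := mul_nonneg hδ0 (hW0 i j)
        ext
        simp [Real.coe_toNNReal _ h0, abs_of_nonneg hδ0, abs_of_nonneg (hW0 i j)]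
      rw [Finset.sum_congr rfl fun j _ => h1 j]
      ext
      push_cast
      rw [Finset.sum_congr rfl (fun j _ => Real.coe_toNNReal _ (mul_nonneg hδ0 (hW0 i j))),
        Real.coe_toNNReal _ hdc0, ← Finset.mul_sum, hWrow i]
    exact le_of_eq this
  have hT : (1 : Matrix (Fin n) (Fin n) ℝ) - δ • Wᵀ = (1 - δ • W)ᵀ := by
    rw [Matrix.transpose_sub, Matrix.transpose_smul, Matrix.transpose_one]
  have hdetT : IsUnit (1 - δ • Wᵀ).det := by
    rw [hT, Matrix.det_transpose]; exact hdet
  refine ⟨hdetT, ?_⟩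
  set M : Matrix (Fin n) (Fin n) ℝ := 1 - δ • Wᵀ with hM
  have hMv : M *ᵥ v = fun _ => 1 := by
    rw [hv, Matrix.mulVec_mulVec, Matrix.mul_nonsing_inv M hdetT, Matrix.one_mulVec]
  -- sum of components
  have hsum : (∑ i, v i) - δ * (c * ∑ i, v i) = n := by
    have h1 : ∀ i, (M *ᵥ v) i = v i - δ * ∑ j, W j i * v j := by
      intro i
      have : M *ᵥ v = v - δ • (Wᵀ *ᵥ v) := by
        rw [hM, Matrix.sub_mulVec, Matrix.smul_mulVec, Matrix.one_mulVec]
      rw [this]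
      simp [Matrix.mulVec, dotProduct, Matrix.transpose_apply, Finset.mul_sum]
    have h2 : ∑ i, (M *ᵥ v) i = (n : ℝ) := by
      rw [hMv]; simp
    rw [Finset.sum_congr rfl fun i _ => h1 i, Finset.sum_sub_distrib,
      ← Finset.mul_sum, Finset.sum_comm] at h2
    have h3 : ∑ j, ∑ i, W j i * v j = c * ∑ j, v j := by
      rw [Finset.mul_sum]
      refine Finset.sum_congr rfl fun j _ => ?_
      rw [← Finset.sum_mul, hWrow j, mul_comm]
    rw [h3] at h2
    exact h2
  have hden : 2*α - δ*(1 - α) > 0 := by nlinarith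
  have hc2 : c * (2*α) = 1 - α := by rw [hc]; field_simp
  rw [eq_div_iff (ne_of_gt hden)]
  linear_combination (2*α) * hsum + (δ * ∑ i, v i) * hc2
end

section
/- Under the dynamics y(t+1) = W y(t) + u_a with W = ((1-α)/(2α))G, G row-stochastic, u_a = c·𝟏 with c = ((1-α)(q_a-q_b))/(4α(q_a+q_b)), and 0 ≤ δ < 1, 1/2 ≤ α < 1, the discounted sum Σ_{t=0}^∞ δᵗ 𝟏ᵀ(𝟏/2 + y(t)) equals n/(2(1-δ)) + vᵀy(0) + λ(q_a-q_b)/(q_a+q_b), where v = (I - δWᵀ)⁻¹𝟏 and λ = δ(1-α)n / (2(1-δ)(2α - δ(1-α))). -/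
open Matrix BigOperators NNReal

attribute [local instance] Matrix.linftyOpNormedAddCommGroup Matrix.linftyOpNormedRing
  Matrix.linftyOpNormedSpace

set_option maxHeartbeats 1000000

/-- The discounted total consumption of product `a` equals
`n/(2(1-δ)) + vᵀ y(0) + λ (q_a - q_b)/(q_a + q_b)`. -/
theorem stmt_4 (n : ℕ) (α δ qa qb : ℝ) (hα : 1/2 ≤ α) (hα1 : α < 1)
    (hδ0 : 0 ≤ δ) (hδ1 : δ < 1) (hqa : 0 < qa) (hqb : 0 < qb)
    (G : Matrix (Fin n) (Fin n) ℝ)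
    (hG0 : ∀ i j, 0 ≤ G i j) (hG1 : ∀ i, ∑ j, G i j = 1)
    (W : Matrix (Fin n) (Fin n) ℝ) (hW : W = ((1 - α)/(2*α)) • G)
    (ua : Fin n → ℝ) (hua : ua = fun _ => ((1 - α)*(qa - qb))/(4*α*(qa + qb)))
    (y : ℕ → Fin n → ℝ) (hy : ∀ t, y (t + 1) = W *ᵥ y t + ua)
    (v : Fin n → ℝ) (hv : v = (1 - δ • Wᵀ)⁻¹ *ᵥ (fun _ => 1))
    (lam : ℝ) (hlam : lam = δ*(1 - α)*n / (2*(1 - δ)*(2*α - δ*(1 - α)))) :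
    ∑' t : ℕ, δ^t * (∑ i, (1/2 + y t i)) =
      n/(2*(1 - δ)) + (∑ i, v i * y 0 i) + lam * (qa - qb)/(qa + qb) := by
  haveI : CompleteSpace (Matrix (Fin n) (Fin n) ℝ) := FiniteDimensional.complete ℝ _
  -- basic facts
  have hα0 : (0:ℝ) < α := by linarith
  have hqs : (0:ℝ) < qa + qb := by linarith
  obtain ⟨β, hβ⟩ : ∃ b : ℝ, b = (1 - α)/(2*α) := ⟨_, rfl⟩
  obtain ⟨c, hc⟩ : ∃ b : ℝ, b = ((1 - α)*(qa - qb))/(4*α*(qa + qb)) := ⟨_, rfl⟩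
  rw [← hβ] at hW
  rw [← hc] at hua
  have hβ0 : 0 ≤ β := by
    rw [hβ]; exact div_nonneg (by linarith) (by linarith)
  have hβlt : β < 1 := by
    rw [hβ, div_lt_one (by linarith : (0:ℝ) < 2*α)]; linarith
  have hβne : β ≠ 1 := ne_of_lt hβlt
  have h1β : (0:ℝ) < 1 - β := by linarith
  have hδβ0 : 0 ≤ δ * β := mul_nonneg hδ0 hβ0
  have hδβ : δ * β < 1 := by nlinarith
  have h1δ : (0:ℝ) < 1 - δ := by linarith
  -- row sums of W
  have hrowW : ∀ i, ∑ j, W i j = β := by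
    intro i
    rw [hW]
    simp only [Matrix.smul_apply, smul_eq_mul, ← Finset.mul_sum, hG1 i, mul_one]
  set M : Matrix (Fin n) (Fin n) ℝ := δ • W with hM
  -- norm of M
  have hrowM : ∀ i, ∑ j, M i j = δ * β := by
    intro i
    rw [hM]
    simp only [Matrix.smul_apply, smul_eq_mul, ← Finset.mul_sum, hrowW i]
  have hM0 : ∀ i j, 0 ≤ M i j := by
    intro i j
    rw [hM, hW]
    simp only [Matrix.smul_apply, smul_eq_mul]
    exact mul_nonneg hδ0 (mul_nonneg hβ0 (hG0 i j))
  have hMnorm : ‖M‖ < 1 := by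
    rw [Matrix.linfty_opNorm_def]
    have h1 : (Finset.univ.sup fun i => ∑ j, ‖M i j‖₊) < 1 := by
      rw [Finset.sup_lt_iff (by norm_num : (0:ℝ≥0) < 1)]
      intro i _
      rw [← NNReal.coe_lt_coe, NNReal.coe_sum, NNReal.coe_one]
      simp only [coe_nnnorm]
      calc ∑ j, ‖M i j‖ = ∑ j, M i j :=
            Finset.sum_congr rfl fun j _ => Real.norm_of_nonneg (hM0 i j)
        _ = δ * β := hrowM i
        _ < 1 := hδβ
    exact_mod_cast h1
  have hMsum : Summable (fun t : ℕ => M ^ t) := summable_geometric_of_norm_lt_one hMnorm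
  -- the linear functional B ↦ ∑ i, (B *ᵥ y 0) i
  set L0 : Matrix (Fin n) (Fin n) ℝ →ₗ[ℝ] ℝ :=
    { toFun := fun B => ∑ i, (B *ᵥ y 0) i,
      map_add' := by intro A B; simp [add_mulVec, Finset.sum_add_distrib]
      map_smul' := by intro r B; simp [smul_mulVec, Finset.mul_sum] } with hL0
  set L : Matrix (Fin n) (Fin n) ℝ →L[ℝ] ℝ := LinearMap.toContinuousLinearMap L0 with hL
  have hLapp : ∀ B, L B = ∑ i, (B *ᵥ y 0) i := fun B => rfl
  -- closed form for y t
  set γ : ℕ → ℝ := fun t => ∑ s ∈ Finset.range t, β ^ s with hγ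
  have hW1 : (W *ᵥ fun _ => (1:ℝ)) = fun _ => β := by
    funext i
    simp only [mulVec, dotProduct, mul_one]
    exact hrowW i
  have hyt : ∀ t, y t = W ^ t *ᵥ y 0 + (c * γ t) • (fun _ => (1:ℝ)) := by
    intro t
    induction t with
    | zero =>
      simp [hγ, one_mulVec]
    | succ t ih =>
      rw [hy t, ih, mulVec_add, mulVec_smul, hW1, mulVec_mulVec, ← pow_succ', hua]
      funext i
      simp only [Pi.add_apply, Pi.smul_apply, smul_eq_mul, hγ, geom_sum_succ]
      ring
  -- termwise identity
  obtain ⟨K, hK⟩ : ∃ b : ℝ, b = n * c / (1 - β) := ⟨_, rfl⟩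
  have hγt : ∀ t, γ t = (1 - β^t)/(1-β) := by
    intro t
    rw [hγ]
    simp only [geom_sum_eq hβne]
    rw [← neg_sub (1:ℝ) (β^t), ← neg_sub (1:ℝ) β, neg_div_neg_eq]
  have hMW : ∀ t : ℕ, L (M ^ t) = δ ^ t * ∑ i, (W ^ t *ᵥ y 0) i := by
    intro t
    rw [hLapp, hM, smul_pow, smul_mulVec]
    simp [Finset.mul_sum]
  have hterm : ∀ t : ℕ, δ^t * (∑ i, (1/2 + y t i)) =
      ((n:ℝ)/2) * δ^t + L (M ^ t) + K * δ^t - K * (δ*β)^t := by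
    intro t
    have hsum : (∑ i, (1/2 + y t i)) = (n:ℝ)/2 + (∑ i, (W ^ t *ᵥ y 0) i) + n * (c * γ t) := by
      rw [hyt t]
      simp only [Pi.add_apply, Pi.smul_apply, smul_eq_mul, mul_one]
      rw [Finset.sum_add_distrib, Finset.sum_add_distrib, Finset.sum_const, Finset.sum_const]
      simp [Finset.card_univ, mul_comm]
      ring
    have hgeo : K * δ^t - K * (δ*β)^t = δ^t * ((n:ℝ) * (c * γ t)) := by
      rw [hK, hγt t, mul_pow]
      field_simp
    rw [hsum, hMW t]
    linarith [hgeo]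
  -- summability
  have hgδ : Summable (fun t : ℕ => δ ^ t) := summable_geometric_of_lt_one hδ0 hδ1
  have hgδβ : Summable (fun t : ℕ => (δ*β) ^ t) := summable_geometric_of_lt_one hδβ0 hδβ
  have hs1 : Summable (fun t : ℕ => ((n:ℝ)/2) * δ^t) := hgδ.mul_left _
  have hs2 : Summable (fun t : ℕ => L (M ^ t)) := hMsum.map L L.continuous
  have hs3 : Summable (fun t : ℕ => K * δ^t) := hgδ.mul_left _
  have hs4 : Summable (fun t : ℕ => K * (δ*β)^t) := hgδβ.mul_left _
  -- compute the tsum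
  rw [tsum_congr hterm, Summable.tsum_sub ((hs1.add hs2).add hs3) hs4,
    Summable.tsum_add (hs1.add hs2) hs3, Summable.tsum_add hs1 hs2, _root_.tsum_mul_left, _root_.tsum_mul_left, _root_.tsum_mul_left,
    tsum_geometric_of_lt_one hδ0 hδ1, tsum_geometric_of_lt_one hδβ0 hδβ,
    ← L.map_tsum hMsum]
  have hinv : (∑' t : ℕ, M ^ t) = (1 - M)⁻¹ := by
    rw [Matrix.nonsing_inv_eq_ringInverse]
    exact geom_series_eq_inverse M hMnorm
  rw [hinv]
  -- identify v with the inverse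
  have hvy : (∑ i, v i * y 0 i) = L ((1 - M)⁻¹) := by
    have h1 : (1 : Matrix (Fin n) (Fin n) ℝ) - δ • Wᵀ = (1 - M)ᵀ := by
      rw [transpose_sub, transpose_one, hM, transpose_smul]
    rw [hv, h1, ← transpose_nonsing_inv, hLapp]
    simp only [mulVec, dotProduct, transpose_apply, mul_one]
    simp_rw [Finset.sum_mul]
    exact Finset.sum_comm
  rw [hvy]
  -- final algebra
  have h2αδ : (0:ℝ) < 2*α - δ*(1-α) := by nlinarith
  have key : K * (1 - δ)⁻¹ - K * (1 - δ*β)⁻¹ = lam * (qa - qb)/(qa + qb) := by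
    rw [hK, hc, hβ, hlam]
    have e1 : (1:ℝ) - (1-α)/(2*α) = (3*α - 1)/(2*α) := by
      field_simp
      ring
    have e2 : (1:ℝ) - δ*((1-α)/(2*α)) = (2*α - δ*(1-α))/(2*α) := by
      field_simp
    rw [e1, e2]
    have h3α : (0:ℝ) < 3*α - 1 := by linarith
    have h2' : α * 2 - (1 - α) * δ ≠ 0 := by nlinarith
    have h3' : α * 3 - 1 ≠ 0 := by linarith
    field_simp [hα0.ne', h1δ.ne', h2αδ.ne', h3α.ne', hqs.ne', h2', h3']
    ring
  have hn2 : (n:ℝ)/2 * (1 - δ)⁻¹ = (n:ℝ)/(2*(1 - δ)) := by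
    rw [div_eq_mul_inv, div_eq_mul_inv, mul_inv]
    ring
  linarith [key, hn2]
end

section
/- In a star graph with n ≥ 2 agents where the central agent puts weight 1/(n-1) on each leaf and each leaf puts weight 1 on the center, the centrality vector v = (I - δWᵀ)⁻¹𝟏 with W = ((1-α)/(2α))G satisfies v_center = (1 + δ(1-α)(n-1)/(2α)) / (1 - (δ(1-α)/(2α))²) and v_leaf = (1 + δ(1-α)/(2α(n-1))) / (1 - (δ(1-α)/(2α))²). -/
open Matrix BigOperators

/-- Centralities in the star graph: the center and the leaves. -/
theorem stmt_6 (n : ℕ) (hn : 2 ≤ n) (α δ : ℝ) (hα : 1/2 ≤ α) (hα1 : α < 1)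
    (hδ0 : 0 ≤ δ) (hδ1 : δ < 1)
    (c : Fin n)
    (G : Matrix (Fin n) (Fin n) ℝ)
    (hG : ∀ i j, G i j =
      if i = c then (if j = c then 0 else 1/((n : ℝ) - 1))
      else (if j = c then 1 else 0))
    (W : Matrix (Fin n) (Fin n) ℝ) (hW : W = ((1 - α)/(2*α)) • G)
    (v : Fin n → ℝ) (hv : v = (1 - δ • Wᵀ)⁻¹ *ᵥ (fun _ => 1)) :
    v c = (1 + δ*(1 - α)*((n : ℝ) - 1)/(2*α)) / (1 - (δ*(1 - α)/(2*α))^2) ∧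
    ∀ i, i ≠ c →
      v i = (1 + δ*(1 - α)/(2*α*((n : ℝ) - 1))) / (1 - (δ*(1 - α)/(2*α))^2) := by
  have h2n : (2:ℝ) ≤ n := by exact_mod_cast hn
  have hne : (n:ℝ) - 1 ≠ 0 := by linarith
  have hα0 : (0:ℝ) < α := by linarith
  have h2α : (2*α) ≠ 0 := by positivity
  set β := δ*(1 - α)/(2*α) with hβ
  have hβ0 : 0 ≤ β := by
    apply div_nonneg
    · nlinarith
    · linarith
  have hβlt : β < 1 := by
    rw [hβ, div_lt_one (by linarith)]
    nlinarith
  have hden : 1 - β^2 ≠ 0 := by nlinarith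
  set M : Matrix (Fin n) (Fin n) ℝ := 1 - δ • Wᵀ with hM
  -- mulVec formula
  have hMx : ∀ x : Fin n → ℝ, ∀ i, (M *ᵥ x) i =
      if i = c then x c - β * ∑ j ∈ Finset.univ.erase c, x j
      else x i - β/((n:ℝ)-1) * x c := by
    intro x i
    have hrow : (M *ᵥ x) i = x i - δ * ∑ j, W j i * x j := by
      have h1 : (M *ᵥ x) = x - δ • (Wᵀ *ᵥ x) := by
        rw [hM, Matrix.sub_mulVec, Matrix.one_mulVec, Matrix.smul_mulVec]
      rw [h1]
      simp only [Pi.sub_apply, Pi.smul_apply, smul_eq_mul, Matrix.mulVec,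
        dotProduct, Matrix.transpose_apply]
    rw [hrow]
    by_cases hi : i = c
    · subst hi
      rw [if_pos rfl]
      have hsum : ∑ j, W j i * x j = ((1 - α)/(2*α)) * ∑ j ∈ Finset.univ.erase i, x j := by
        rw [Finset.mul_sum]
        rw [← Finset.sum_subset (Finset.erase_subset _ _)]
        · apply Finset.sum_congr rfl
          intro j hj
          have hj' : j ≠ i := Finset.ne_of_mem_erase hj
          rw [hW]; simp [hG, hj']
        · intro j _ hj
          have : j = i := by simpa using hj
          subst this
          rw [hW]; simp [hG]
      rw [hsum, hβ]; ring
    · rw [if_neg hi]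
      have hsum : ∑ j, W j i * x j = ((1 - α)/(2*α)) * (1/((n:ℝ)-1) * x c) := by
        rw [Finset.sum_eq_single c]
        · rw [hW]; simp [hG, hi, mul_assoc]
        · intro j _ hj
          rw [hW]; simp [hG, hj, hi]
        · simp
      rw [hsum, hβ]; ring
  -- the candidate solution
  set u : Fin n → ℝ := fun i =>
    if i = c then (1 + β*((n:ℝ)-1))/(1 - β^2) else (1 + β/((n:ℝ)-1))/(1 - β^2) with hu
  have hcard : ((Finset.univ.erase c).card : ℝ) = (n:ℝ) - 1 := by
    rw [Finset.card_erase_of_mem (Finset.mem_univ c)]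
    simp
    have : 1 ≤ n := by omega
    push_cast [Nat.cast_sub this]
    ring
  have hMu : M *ᵥ u = (fun _ => 1) := by
    funext i
    rw [hMx]
    by_cases hi : i = c
    · subst hi
      rw [if_pos rfl]
      have hsum : ∑ j ∈ Finset.univ.erase i, u j = ((n:ℝ)-1) * ((1 + β/((n:ℝ)-1))/(1 - β^2)) := by
        have h1 : ∑ j ∈ Finset.univ.erase i, u j
            = ∑ _j ∈ Finset.univ.erase i, (1 + β/((n:ℝ)-1))/(1 - β^2) :=
          Finset.sum_congr rfl (fun j hj => by
            simp [hu, Finset.ne_of_mem_erase hj])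
        rw [h1, Finset.sum_const, nsmul_eq_mul, hcard]
      rw [hsum]
      simp only [hu, if_pos rfl]
      field_simp
      ring
    · rw [if_neg hi]
      simp only [hu, if_neg hi, if_pos rfl]
      field_simp
      ring
  -- M is invertible
  have hdet : IsUnit M.det := by
    rw [isUnit_iff_ne_zero]
    intro h0
    obtain ⟨x, hx0, hx⟩ := (Matrix.exists_mulVec_eq_zero_iff).mpr h0
    have hleaf : ∀ i, i ≠ c → x i = β/((n:ℝ)-1) * x c := by
      intro i hi
      have h := congrFun hx i
      rw [hMx, if_neg hi] at h
      simp only [Pi.zero_apply] at h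
      linarith [h]
    have hcent := congrFun hx c
    rw [hMx, if_pos rfl] at hcent
    simp only [Pi.zero_apply] at hcent
    have hsum : ∑ j ∈ Finset.univ.erase c, x j = ((n:ℝ)-1) * (β/((n:ℝ)-1) * x c) := by
      have h1 : ∑ j ∈ Finset.univ.erase c, x j
          = ∑ j ∈ Finset.univ.erase c, β/((n:ℝ)-1) * x c :=
        Finset.sum_congr rfl (fun j hj => hleaf j (Finset.ne_of_mem_erase hj))
      rw [h1, Finset.sum_const, nsmul_eq_mul, hcard]
    rw [hsum] at hcent
    have hxc : x c = 0 := by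
      have hh : β * (((n:ℝ) - 1) * (β / ((n:ℝ) - 1) * x c)) = β^2 * x c := by
        field_simp
      rw [hh] at hcent
      have h1 : x c * (1 - β^2) = 0 := by linear_combination hcent
      rcases mul_eq_zero.mp h1 with h | h
      · exact h
      · exact absurd h hden
    apply hx0
    funext i
    by_cases hi : i = c
    · subst hi; simpa using hxc
    · rw [hleaf i hi, hxc]; simp
  have hvu : v = u := by
    rw [hv, ← hMu, Matrix.mulVec_mulVec, Matrix.nonsing_inv_mul M hdet, Matrix.one_mulVec]
  constructor
  · rw [hvu]
    simp only [hu, if_pos rfl]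
    rw [hβ]
    field_simp
    try ring
  · intro i hi
    rw [hvu]
    simp only [hu, if_neg hi]
    rw [hβ]
    field_simp
    try ring
end

section
/- For any row-stochastic matrix G with zero diagonal, with W = ((1-α)/(2α))G, v = (I - δWᵀ)⁻¹𝟏, v̄ = 2α/(2α - δ(1-α)) and v_h = (1 + δ(1-α)(n-1)/(2α)) / (1 - (δ(1-α)/(2α))²), the maximum centrality satisfies v̄ ≤ max_i v_i ≤ v_h. -/
open Matrix BigOperators

/-- For any row-stochastic graph with zero diagonal, the maximum centrality lies
between the balanced-graph centrality `v̄` and the star-center centrality `v_h`. -/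
theorem stmt_7 (n : ℕ) (hn : 2 ≤ n) (α δ : ℝ) (hα : 1/2 ≤ α) (hα1 : α < 1)
    (hδ0 : 0 ≤ δ) (hδ1 : δ < 1)
    (G : Matrix (Fin n) (Fin n) ℝ)
    (hG0 : ∀ i j, 0 ≤ G i j) (hG1 : ∀ i, ∑ j, G i j = 1)
    (hGdiag : ∀ i, G i i = 0)
    (W : Matrix (Fin n) (Fin n) ℝ) (hW : W = ((1 - α)/(2*α)) • G)
    (v : Fin n → ℝ) (hv : v = (1 - δ • Wᵀ)⁻¹ *ᵥ (fun _ => 1))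
    (vbar vh : ℝ) (hvbar : vbar = 2*α / (2*α - δ*(1 - α)))
    (hvh : vh = (1 + δ*(1 - α)*((n : ℝ) - 1)/(2*α)) / (1 - (δ*(1 - α)/(2*α))^2)) :
    (∃ i, vbar ≤ v i) ∧ (∀ i, v i ≤ vh) := by
  haveI : NeZero n := ⟨by omega⟩
  set c : ℝ := (1 - α)/(2*α) with hc
  have hα0 : (0:ℝ) < α := by linarith
  have h2α : (0:ℝ) < 2*α := by linarith
  have hc0 : 0 ≤ c := div_nonneg (by linarith) h2α.le
  have hc1 : c ≤ 1 := by rw [hc, div_le_one h2α]; linarith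
  have hδc0 : 0 ≤ δ * c := mul_nonneg hδ0 hc0
  have hδc1 : δ * c < 1 :=
    lt_of_le_of_lt (mul_le_of_le_one_right hδ0 hc1) hδ1
  have hGle : ∀ i j, G i j ≤ 1 := by
    intro i j
    calc G i j ≤ ∑ k, G i k :=
          Finset.single_le_sum (fun k _ => hG0 i k) (Finset.mem_univ j)
      _ = 1 := hG1 i
  set M : Matrix (Fin n) (Fin n) ℝ := 1 - δ • Wᵀ with hM
  -- determinant nonzero by strict column diagonal dominance
  have hdet : M.det ≠ 0 := by
    apply det_ne_zero_of_sum_col_lt_diag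
    intro k
    have hMkk : M k k = 1 := by
      simp [hM, hW, Matrix.sub_apply, Matrix.one_apply, hGdiag k]
    have hMik : ∀ i, i ≠ k → M i k = -(δ * (c * G k i)) := by
      intro i hik
      simp [hM, hW, Matrix.sub_apply, Matrix.one_apply, hik]
    have hsum : ∑ i ∈ Finset.univ.erase k, ‖M i k‖
        = δ * c * ∑ i ∈ Finset.univ.erase k, G k i := by
      rw [Finset.mul_sum]
      apply Finset.sum_congr rfl
      intro i hi
      have hik : i ≠ k := Finset.ne_of_mem_erase hi
      rw [hMik i hik, norm_neg, Real.norm_eq_abs,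
        abs_of_nonneg (mul_nonneg hδ0 (mul_nonneg hc0 (hG0 k i))), mul_assoc]
    have herase : ∑ i ∈ Finset.univ.erase k, G k i = 1 := by
      rw [Finset.sum_erase_eq_sub (Finset.mem_univ k), hG1 k, hGdiag k, sub_zero]
    rw [hsum, herase, hMkk, mul_one]
    simpa using hδc1
  -- the componentwise equation
  have hMv : M *ᵥ v = fun _ => 1 := by
    rw [hv, Matrix.mulVec_mulVec, Matrix.mul_nonsing_inv M (isUnit_iff_ne_zero.mpr hdet),
      Matrix.one_mulVec]
  have heq : ∀ i, v i = 1 + δ * c * ∑ j, G j i * v j := by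
    intro i
    have h1 := congrFun hMv i
    have h2 : (M *ᵥ v) i = v i - δ * c * ∑ j, G j i * v j := by
      simp only [hM, Matrix.mulVec, dotProduct, Matrix.sub_apply,
        Matrix.one_apply, Matrix.smul_apply, Matrix.transpose_apply, hW,
        smul_eq_mul, sub_mul, ite_mul, one_mul, zero_mul,
        Finset.sum_sub_distrib, Finset.sum_ite_eq, Finset.mem_univ, if_true]
      rw [Finset.mul_sum]
      congr 1
      exact Finset.sum_congr rfl (fun j _ => by ring)
    rw [h2] at h1
    linarith [h1]
  -- nonnegativity of v
  have hvnn : ∀ i, 0 ≤ v i := by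
    by_contra hcon
    push_neg at hcon
    obtain ⟨k, hk⟩ := hcon
    set N : Finset (Fin n) := Finset.univ.filter (fun j => v j < 0) with hN
    have hkN : k ∈ N := by simp [hN, hk]
    have hNne : N.Nonempty := ⟨k, hkN⟩
    set T : ℝ := ∑ i ∈ N, v i with hT
    have hTneg : T < 0 := by
      apply Finset.sum_neg _ hNne
      intro i hi
      exact (Finset.mem_filter.mp hi).2
    have hTeq : T = N.card + δ * c * ∑ j, v j * ∑ i ∈ N, G j i := by
      calc T = ∑ i ∈ N, (1 + δ * c * ∑ j, G j i * v j) :=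
            Finset.sum_congr rfl (fun i _ => heq i)
        _ = N.card + δ * c * ∑ i ∈ N, ∑ j, G j i * v j := by
            rw [Finset.sum_add_distrib, Finset.sum_const, ← Finset.mul_sum]
            simp
        _ = N.card + δ * c * ∑ j, v j * ∑ i ∈ N, G j i := by
            congr 1
            rw [Finset.sum_comm]
            congr 1
            apply Finset.sum_congr rfl
            intro j _
            rw [Finset.mul_sum]
            exact Finset.sum_congr rfl (fun i _ => by ring)
    have hbound : T ≤ ∑ j, v j * ∑ i ∈ N, G j i := by
      have hsplit := Finset.sum_filter_add_sum_filter_not Finset.univ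
        (fun j => v j < 0) (fun j => v j * ∑ i ∈ N, G j i)
      have h1 : ∀ j ∈ N, v j ≤ v j * ∑ i ∈ N, G j i := by
        intro j hj
        have hvj : v j < 0 := (Finset.mem_filter.mp hj).2
        have hsle : ∑ i ∈ N, G j i ≤ 1 := by
          calc ∑ i ∈ N, G j i ≤ ∑ i, G j i :=
                Finset.sum_le_sum_of_subset_of_nonneg (Finset.subset_univ N)
                  (fun i _ _ => hG0 j i)
            _ = 1 := hG1 j
        nlinarith
      have h2 : 0 ≤ ∑ j ∈ Finset.univ.filter (fun j => ¬ v j < 0),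
          v j * ∑ i ∈ N, G j i := by
        apply Finset.sum_nonneg
        intro j hj
        have hvj : 0 ≤ v j := le_of_not_gt (Finset.mem_filter.mp hj).2
        exact mul_nonneg hvj (Finset.sum_nonneg (fun i _ => hG0 j i))
      calc T ≤ ∑ j ∈ N, v j * ∑ i ∈ N, G j i := Finset.sum_le_sum h1
        _ ≤ (∑ j ∈ Finset.univ.filter (fun j => v j < 0), v j * ∑ i ∈ N, G j i)
            + ∑ j ∈ Finset.univ.filter (fun j => ¬ v j < 0), v j * ∑ i ∈ N, G j i :=
              le_add_of_nonneg_right h2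
        _ = ∑ j, v j * ∑ i ∈ N, G j i := hsplit
    have hcard : (1:ℝ) ≤ N.card := by
      have := Finset.card_pos.mpr hNne
      exact_mod_cast this
    have hge : (1 - δ * c) * T ≥ (N.card : ℝ) := by
      have h3 : δ * c * T ≤ δ * c * ∑ j, v j * ∑ i ∈ N, G j i :=
        mul_le_mul_of_nonneg_left hbound hδc0
      nlinarith [hTeq]
    nlinarith [mul_pos (sub_pos.mpr hδc1) (neg_pos.mpr hTneg)]
  -- the sum of v
  set S : ℝ := ∑ i, v i with hS
  have hSeq : (1 - δ * c) * S = n := by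
    have hkey : S = n + δ * c * S := by
      calc S = ∑ i, (1 + δ * c * ∑ j, G j i * v j) :=
            Finset.sum_congr rfl (fun i _ => heq i)
        _ = n + δ * c * ∑ i, ∑ j, G j i * v j := by
            rw [Finset.sum_add_distrib, Finset.sum_const, ← Finset.mul_sum]
            simp
        _ = n + δ * c * S := by
            congr 1
            congr 1
            rw [Finset.sum_comm]
            exact Finset.sum_congr rfl
              (fun j _ => by rw [← Finset.sum_mul, hG1 j, one_mul])
    linarith
  have hden : (0:ℝ) < 2*α - δ*(1 - α) := by
    nlinarith [mul_lt_mul_of_pos_right hδ1 (show (0:ℝ) < 1 - α by linarith)]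
  have hvbar' : vbar * (1 - δ * c) = 1 := by
    rw [hvbar, hc]
    field_simp
  -- lower bound
  have hlow : ∃ i, vbar ≤ v i := by
    by_contra hcon
    push_neg at hcon
    have hlt : S < ∑ _i : Fin n, vbar :=
      Finset.sum_lt_sum_of_nonempty Finset.univ_nonempty (fun i _ => hcon i)
    rw [Finset.sum_const, Finset.card_univ, Fintype.card_fin, nsmul_eq_mul] at hlt
    have h1 : (1 - δ * c) * S < (1 - δ * c) * ((n:ℝ) * vbar) := by
      apply mul_lt_mul_of_pos_left hlt
      linarith
    have h2 : (1 - δ * c) * ((n:ℝ) * vbar) = n := by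
      have h3 : (1 - δ*c)*((n:ℝ)*vbar) = (n:ℝ)*(vbar*(1-δ*c)) := by ring
      rw [h3, hvbar', mul_one]
    rw [hSeq, h2] at h1
    exact lt_irrefl _ h1
  -- upper bound
  obtain ⟨i0, -, hmax⟩ := Finset.exists_max_image Finset.univ v Finset.univ_nonempty
  have hm : v i0 = 1 + δ * c * ∑ j, G j i0 * v j := heq i0
  have hsum_le : ∑ j, G j i0 * v j ≤ S - v i0 := by
    have h0 : ∑ j ∈ Finset.univ.erase i0, G j i0 * v j
        = (∑ j, G j i0 * v j) - G i0 i0 * v i0 :=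
      Finset.sum_erase_eq_sub (Finset.mem_univ i0)
    have h1 : ∑ j ∈ Finset.univ.erase i0, G j i0 * v j
        ≤ ∑ j ∈ Finset.univ.erase i0, v j := by
      apply Finset.sum_le_sum
      intro j _
      exact mul_le_of_le_one_left (hvnn j) (hGle j i0)
    have h2 : ∑ j ∈ Finset.univ.erase i0, v j = S - v i0 :=
      Finset.sum_erase_eq_sub (Finset.mem_univ i0)
    rw [hGdiag i0, zero_mul, sub_zero] at h0
    rw [← h0]
    linarith
  have hvh' : vh = (1 + δ * c * ((n:ℝ) - 1)) / (1 - (δ * c)^2) := by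
    rw [hvh, hc]
    ring_nf
  have hpos : 0 < 1 - (δ * c)^2 := by nlinarith
  have key : v i0 * (1 + δ * c) ≤ 1 + δ * c * S := by
    have h4 : δ * c * ∑ j, G j i0 * v j ≤ δ * c * (S - v i0) :=
      mul_le_mul_of_nonneg_left hsum_le hδc0
    linarith [hm, h4]
  have hmvh : v i0 ≤ vh := by
    rw [hvh', le_div_iff₀ hpos]
    calc v i0 * (1 - (δ*c)^2) = v i0 * (1 + δ*c) * (1 - δ*c) := by ring
      _ ≤ (1 + δ*c*S) * (1 - δ*c) :=
          mul_le_mul_of_nonneg_right key (by linarith)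
      _ = 1 - δ*c + δ*c*((1 - δ*c)*S) := by ring
      _ = 1 - δ*c + δ*c*(n:ℝ) := by rw [hSeq]
      _ = 1 + δ*c*((n:ℝ) - 1) := by ring
  exact ⟨hlow, fun i => le_trans (hmax i (Finset.mem_univ i)) hmvh⟩
end

section
/- If the seeding threshold satisfies v_c^a < v̄ = 2α/(2α - δ(1-α)) (i.e., the balanced graph has nonzero seeding capacity), then for every row-stochastic G there exists an agent i with v_i > v_c^a (i.e., every graph has nonzero seeding capacity). -/
open Matrix BigOperators

/-- If the seeding threshold is below the balanced-graph centrality, then every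
row-stochastic graph has an agent whose centrality exceeds the threshold. -/
theorem stmt_9 (n : ℕ) (hn : 0 < n) (α δ : ℝ) (hα : 1/2 ≤ α) (hα1 : α < 1)
    (hδ0 : 0 ≤ δ) (hδ1 : δ < 1)
    (vca : ℝ) (hvca : vca < 2*α / (2*α - δ*(1 - α))) :
    ∀ G : Matrix (Fin n) (Fin n) ℝ, (∀ i j, 0 ≤ G i j) → (∀ i, ∑ j, G i j = 1) →
      ∀ W : Matrix (Fin n) (Fin n) ℝ, W = ((1 - α)/(2*α)) • G →
      ∀ v : Fin n → ℝ, v = (1 - δ • Wᵀ)⁻¹ *ᵥ (fun _ => 1) →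
      ∃ i, vca < v i := by
  intro G hG0 hG1 W hW v hv
  have hα0 : 0 < α := lt_of_lt_of_le (by norm_num) hα
  set c : ℝ := (1 - α)/(2*α) with hc
  have hc0 : 0 ≤ c := div_nonneg (by linarith) (by linarith)
  have hchalf : c ≤ 1/2 := by
    rw [hc, div_le_div_iff₀ (by linarith) (by norm_num)]
    linarith
  have hδc : δ * c < 1 := by
    have : δ * c ≤ 1 * c := mul_le_mul_of_nonneg_right (le_of_lt hδ1) hc0
    linarith
  -- W entries
  have hWe : ∀ i j, W i j = c * G i j := by intro i j; rw [hW]; rfl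
  have hW0 : ∀ i j, 0 ≤ W i j := fun i j => by
    rw [hWe]; exact mul_nonneg hc0 (hG0 i j)
  have hWrow : ∀ i, ∑ j, W i j = c := by
    intro i
    simp_rw [hWe, ← Finset.mul_sum, hG1 i, mul_one]
  have hWle : ∀ i j, W i j ≤ c := by
    intro i j
    have := Finset.single_le_sum (f := fun j => W i j) (fun k _ => hW0 i k)
      (Finset.mem_univ j)
    rw [hWrow i] at this; exact this
  set A : Matrix (Fin n) (Fin n) ℝ := 1 - δ • Wᵀ with hA
  have hAe : ∀ i j, A i j = (if i = j then (1:ℝ) else 0) - δ * W j i := by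
    intro i j
    simp [hA, Matrix.sub_apply, Matrix.one_apply, Matrix.smul_apply,
      Matrix.transpose_apply, smul_eq_mul]
  -- determinant nonzero by column diagonal dominance
  have hdet : A.det ≠ 0 := by
    apply det_ne_zero_of_sum_col_lt_diag
    intro k
    have hdiag : A k k = 1 - δ * W k k := by rw [hAe]; simp
    have hWkk : δ * W k k ≤ δ * c := mul_le_mul_of_nonneg_left (hWle k k) hδ0
    have hsum : ∑ i ∈ Finset.univ.erase k, ‖A i k‖ = δ * (c - W k k) := by
      have : ∀ i ∈ Finset.univ.erase k, ‖A i k‖ = δ * W k i := by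
        intro i hi
        have hik : i ≠ k := Finset.ne_of_mem_erase hi
        rw [hAe, if_neg hik, zero_sub, norm_neg, Real.norm_eq_abs,
          abs_of_nonneg (mul_nonneg hδ0 (hW0 k i))]
      rw [Finset.sum_congr rfl this, ← Finset.mul_sum]
      congr 1
      have := Finset.sum_erase_add Finset.univ (fun i => W k i) (Finset.mem_univ k)
      rw [hWrow k] at this
      linarith
    rw [hsum, hdiag, Real.norm_eq_abs, abs_of_pos (by nlinarith [mul_nonneg hδ0 (hW0 k k)])]
    nlinarith [mul_nonneg hδ0 (hW0 k k)]
  -- A *ᵥ v = 1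
  have hAv : A *ᵥ v = (fun _ => (1:ℝ)) := by
    rw [hv, Matrix.mulVec_mulVec, Matrix.mul_nonsing_inv A (isUnit_iff_ne_zero.mpr hdet),
      Matrix.one_mulVec]
  -- sum of v
  have hsumA : ∀ j, ∑ i, A i j = 1 - δ * c := by
    intro j
    simp_rw [hAe]
    rw [Finset.sum_sub_distrib, ← Finset.mul_sum, hWrow j]
    simp
  have hsumv : (1 - δ * c) * ∑ j, v j = n := by
    have h1 : ∑ i, (A *ᵥ v) i = (n : ℝ) := by rw [hAv]; simp
    have h2 : ∑ i, (A *ᵥ v) i = ∑ j, (∑ i, A i j) * v j := by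
      simp_rw [Matrix.mulVec, dotProduct, Finset.sum_mul]
      rw [Finset.sum_comm]
    rw [h2] at h1
    simp_rw [hsumA] at h1
    rw [← Finset.mul_sum] at h1
    exact h1
  have h1δc : (0:ℝ) < 1 - δ * c := by linarith
  have hvca' : vca < 1 / (1 - δ * c) := by
    have heq : 2*α / (2*α - δ*(1 - α)) = 1 / (1 - δ * c) := by
      rw [hc]
      field_simp
    rwa [heq] at hvca
  -- conclude
  by_contra hcon
  push_neg at hcon
  have hle : ∑ j, v j ≤ ∑ _j : Fin n, vca := Finset.sum_le_sum fun j _ => hcon j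
  have : (n:ℝ) ≤ (1 - δ * c) * (n * vca) := by
    calc (n:ℝ) = (1 - δ * c) * ∑ j, v j := hsumv.symm
    _ ≤ (1 - δ * c) * (n * vca) := by
        apply mul_le_mul_of_nonneg_left _ (le_of_lt h1δc)
        simpa using hle
  have hn' : (0:ℝ) < n := by exact_mod_cast hn
  have : 1 / (1 - δ * c) ≤ vca := by
    rw [div_le_iff₀ h1δc]
    nlinarith
  linarith
end

section
/- If the seeding threshold satisfies v_c^a > v_h = (1 + δ(1-α)(n-1)/(2α)) / (1 - (δ(1-α)/(2α))²) (i.e., the star graph has zero seeding capacity), then for every row-stochastic G with zero diagonal and every agent i, v_i < v_c^a (i.e., every graph has zero seeding capacity). -/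
open Matrix BigOperators Filter

/-- Key sequence lemma: if `b t ≥ 0` and `b (t+1) ≤ N - b t`, then the geometric
partial sums are bounded by `(b 0 + q*(N - b 0))/(1-q²)`. -/
lemma stmt_10_aux (N q : ℝ) (hq0 : 0 ≤ q) (hq1 : q < 1) :
    ∀ (T : ℕ) (b : ℕ → ℝ), (∀ t, 0 ≤ b t) → (∀ t, b (t+1) ≤ N - b t) →
    ∑ t ∈ Finset.range T, q^t * b t ≤ (b 0 + q * (N - b 0))/(1 - q^2) := by
  have hq2 : 0 < 1 - q^2 := by nlinarith
  intro T
  induction T with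
  | zero =>
    intro b hb0 hbs
    simp only [Finset.range_zero, Finset.sum_empty]
    have h1 : 0 ≤ N - b 0 := le_trans (hb0 1) (hbs 0)
    exact div_nonneg (add_nonneg (hb0 0) (mul_nonneg hq0 h1)) hq2.le
  | succ T ih =>
    intro b hb0 hbs
    have h1 : ∑ t ∈ Finset.range (T+1), q^t * b t
        = q * (∑ t ∈ Finset.range T, q^t * b (t+1)) + b 0 := by
      rw [Finset.sum_range_succ' (fun t => q^t * b t) T]
      simp only [pow_zero, one_mul]
      congr 1
      rw [Finset.mul_sum]
      exact Finset.sum_congr rfl (fun k _ => by ring)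
    have h2 := ih (fun t => b (t+1)) (fun t => hb0 (t+1)) (fun t => hbs (t+1))
    rw [h1]
    have hb1 : b 1 ≤ N - b 0 := hbs 0
    rw [le_div_iff₀ hq2]
    have h2' : (∑ t ∈ Finset.range T, q ^ t * b (t+1)) * (1 - q^2)
        ≤ b (0+1) + q * (N - b (0+1)) := (le_div_iff₀ hq2).mp h2
    simp only [zero_add] at h2'
    nlinarith [mul_le_mul_of_nonneg_left h2' hq0,
      mul_le_mul_of_nonneg_left hb1 (mul_nonneg hq0 (by linarith : (0:ℝ) ≤ 1 - q)),
      hb0 0, hb0 1]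

/-- If the seeding threshold exceeds the star-center centrality `v_h`, then no
agent of any row-stochastic graph with zero diagonal can be seeded. -/
theorem stmt_10 (n : ℕ) (hn : 2 ≤ n) (α δ : ℝ) (hα : 1/2 ≤ α) (hα1 : α < 1)
    (hδ0 : 0 ≤ δ) (hδ1 : δ < 1)
    (vca : ℝ)
    (hvca : (1 + δ*(1 - α)*((n : ℝ) - 1)/(2*α)) / (1 - (δ*(1 - α)/(2*α))^2) < vca) :
    ∀ G : Matrix (Fin n) (Fin n) ℝ, (∀ i j, 0 ≤ G i j) → (∀ i, ∑ j, G i j = 1) →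
      (∀ i, G i i = 0) →
      ∀ W : Matrix (Fin n) (Fin n) ℝ, W = ((1 - α)/(2*α)) • G →
      ∀ v : Fin n → ℝ, v = (1 - δ • Wᵀ)⁻¹ *ᵥ (fun _ => 1) →
      ∀ i, v i < vca := by
  intro G hG0 hG1 hGd W hW v hv i
  have hα0 : 0 < α := by linarith
  have h2α : 0 < 2*α := by linarith
  set q : ℝ := δ * ((1 - α)/(2*α)) with hq
  have hq0 : 0 ≤ q := by
    apply mul_nonneg hδ0
    apply div_nonneg (by linarith) (by linarith)
  have hq1 : q < 1 := by
    rw [hq, mul_div_assoc']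
    rw [div_lt_one h2α]
    nlinarith
  have hq2 : 0 < 1 - q^2 := by nlinarith
  -- the matrix
  have hmat : δ • Wᵀ = q • Gᵀ := by
    rw [hW, transpose_smul, smul_smul, hq]
  clear_value q
  set M : Matrix (Fin n) (Fin n) ℝ := 1 - q • Gᵀ with hM
  have hvM : v = M⁻¹ *ᵥ (fun _ => 1) := by rw [hv, hmat]
  -- invertibility
  have hdet : M.det ≠ 0 := by
    intro h0
    obtain ⟨x, hx0, hx⟩ := (Matrix.exists_mulVec_eq_zero_iff).mpr h0
    have hxi : ∀ i, x i = q * ∑ j, G j i * x j := by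
      intro i
      have := congrFun hx i
      simp only [hM, sub_mulVec, one_mulVec, smul_mulVec, Pi.sub_apply,
        Pi.smul_apply, smul_eq_mul, Pi.zero_apply] at this
      have h2 : (Gᵀ *ᵥ x) i = ∑ j, G j i * x j := by
        simp [Matrix.mulVec, dotProduct, Matrix.transpose_apply]
      rw [h2] at this
      linarith
    set s : ℝ := ∑ i, |x i| with hs
    have hs0 : 0 ≤ s := Finset.sum_nonneg (fun i _ => abs_nonneg _)
    have hsq : s ≤ q * s := by
      calc s = ∑ i, |q * ∑ j, G j i * x j| := by
            rw [hs]; exact Finset.sum_congr rfl (fun i _ => by rw [hxi i])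
        _ ≤ ∑ i, q * ∑ j, G j i * |x j| := by
            apply Finset.sum_le_sum
            intro i _
            rw [abs_mul, abs_of_nonneg hq0]
            apply mul_le_mul_of_nonneg_left _ hq0
            refine le_trans (Finset.abs_sum_le_sum_abs _ _) ?_
            apply Finset.sum_le_sum
            intro j _
            rw [abs_mul, abs_of_nonneg (hG0 j i)]
        _ = q * ∑ j, (∑ i, G j i) * |x j| := by
            rw [← Finset.mul_sum, Finset.sum_comm]
            congr 1
            exact Finset.sum_congr rfl (fun j _ => by rw [Finset.sum_mul])
        _ = q * s := by
            rw [hs]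
            congr 1
            exact Finset.sum_congr rfl (fun j _ => by rw [hG1 j, one_mul])
    have hs00 : s = 0 := by nlinarith
    apply hx0
    funext j
    have : |x j| ≤ s := by
      rw [hs]
      exact Finset.single_le_sum (fun i _ => abs_nonneg (x i)) (Finset.mem_univ j)
    have := abs_nonneg (x j)
    simp only [Pi.zero_apply]
    rw [← abs_eq_zero]
    linarith [Finset.single_le_sum (fun i (_ : i ∈ Finset.univ) => abs_nonneg (x i)) (Finset.mem_univ j), hs00]
  have hdetU : IsUnit M.det := isUnit_iff_ne_zero.mpr hdet
  -- the fixed-point equation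
  have hMv : M *ᵥ v = (fun _ => 1) := by
    rw [hvM, Matrix.mulVec_mulVec, Matrix.mul_nonsing_inv _ hdetU, Matrix.one_mulVec]
  have hveq : ∀ k, v k = 1 + q * ∑ j, G j k * v j := by
    intro k
    have := congrFun hMv k
    simp only [hM, sub_mulVec, one_mulVec, smul_mulVec, Pi.sub_apply,
      Pi.smul_apply, smul_eq_mul] at this
    have h2 : (Gᵀ *ᵥ v) k = ∑ j, G j k * v j := by
      simp [Matrix.mulVec, dotProduct, Matrix.transpose_apply]
    rw [h2] at this
    linarith
  -- powers of G
  have hpow : ∀ t : ℕ, (∀ k j, 0 ≤ (G^t) k j) ∧ (∀ k, ∑ j, (G^t) k j = 1) := by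
    intro t
    induction t with
    | zero =>
      constructor
      · intro k j; simp [Matrix.one_apply]; split <;> norm_num
      · intro k; simp [Matrix.one_apply]
    | succ t ih =>
      constructor
      · intro k j
        rw [pow_succ, Matrix.mul_apply]
        exact Finset.sum_nonneg (fun l _ => mul_nonneg (ih.1 k l) (hG0 l j))
      · intro k
        rw [pow_succ]
        simp only [Matrix.mul_apply]
        rw [Finset.sum_comm]
        calc ∑ l, ∑ j, (G^t) k l * G l j = ∑ l, (G^t) k l * ∑ j, G l j := by
              exact Finset.sum_congr rfl (fun l _ => by rw [Finset.mul_sum])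
          _ = 1 := by
              rw [← ih.2 k]
              exact Finset.sum_congr rfl (fun l _ => by rw [hG1 l, mul_one])
  have hpow_le : ∀ t k j, (G^t) k j ≤ 1 := by
    intro t k j
    rw [← (hpow t).2 k]
    exact Finset.single_le_sum (fun l (_ : l ∈ Finset.univ) => (hpow t).1 k l) (Finset.mem_univ j)
  -- column sums
  set w : ℕ → Fin n → ℝ := fun t i => ∑ k, (G^t) k i with hwdef
  have hw0 : ∀ k, w 0 k = 1 := by
    intro k; simp [hwdef, Matrix.one_apply]
  have hw_nonneg : ∀ t k, 0 ≤ w t k :=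
    fun t k => Finset.sum_nonneg (fun l _ => (hpow t).1 l k)
  have hw_total : ∀ t, ∑ j, w t j = (n : ℝ) := by
    intro t
    rw [hwdef]
    simp only
    rw [Finset.sum_comm]
    rw [Finset.sum_congr rfl (fun k (_ : k ∈ Finset.univ) => (hpow t).2 k)]
    simp
  have hw_rec : ∀ t k, w (t+1) k = ∑ j, G j k * w t j := by
    intro t k
    simp only [hwdef]
    have h1 : ∀ l, (G^(t+1)) l k = ∑ j, (G^t) l j * G j k := by
      intro l; rw [pow_succ, Matrix.mul_apply]
    calc ∑ l, (G^(t+1)) l k = ∑ l, ∑ j, (G^t) l j * G j k :=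
          Finset.sum_congr rfl (fun l _ => h1 l)
      _ = ∑ j, ∑ l, (G^t) l j * G j k := Finset.sum_comm
      _ = ∑ j, G j k * ∑ l, (G^t) l j :=
          Finset.sum_congr rfl (fun j _ => by rw [← Finset.sum_mul, mul_comm])
  have hw_step : ∀ t k, w (t+1) k ≤ (n : ℝ) - w t k := by
    intro t k
    rw [hw_rec t k]
    have h1 : ∑ j, G j k * w t j ≤ ∑ j, (if j = k then 0 else w t j) := by
      apply Finset.sum_le_sum
      intro j _
      by_cases hjk : j = k
      · simp [hjk, hGd k]
      · simp only [if_neg hjk]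
        calc G j k * w t j ≤ 1 * w t j :=
            mul_le_mul_of_nonneg_right (by
              rw [← hG1 j]
              exact Finset.single_le_sum (fun l (_ : l ∈ Finset.univ) => hG0 j l) (Finset.mem_univ k))
              (hw_nonneg t j)
          _ = w t j := one_mul _
    have h2 : ∑ j, (if j = k then 0 else w t j) = (n : ℝ) - w t k := by
      rw [← hw_total t]
      have h3 : ∀ j : Fin n, (if j = k then 0 else w t j)
          = w t j - (if j = k then w t j else 0) := by
        intro j; split <;> simp
      rw [Finset.sum_congr rfl (fun j _ => h3 j), Finset.sum_sub_distrib]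
      simp
    linarith
  -- expansion identity
  have hexp : ∀ T : ℕ, v i = (∑ t ∈ Finset.range (T+1), q^t * w t i)
      + q^(T+1) * ∑ k, (G^(T+1)) k i * v k := by
    intro T
    induction T with
    | zero =>
      simp only [zero_add, Finset.range_one, Finset.sum_singleton, pow_zero, pow_one, one_mul]
      rw [hw0 i, hveq i]
    | succ T ih =>
      rw [ih]
      have hpow2 : ∀ j, (G^(T+1+1)) j i = ∑ k, G j k * (G^(T+1)) k i := by
        intro j; rw [pow_succ' G (T+1), Matrix.mul_apply]
      have hswap : ∑ k, (G^(T+1)) k i * ∑ j, G j k * v j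
          = ∑ j, (G^(T+1+1)) j i * v j := by
        calc ∑ k, (G^(T+1)) k i * ∑ j, G j k * v j
            = ∑ k, ∑ j, (G^(T+1)) k i * (G j k * v j) :=
              Finset.sum_congr rfl (fun k _ => Finset.mul_sum _ _ _)
          _ = ∑ j, ∑ k, (G^(T+1)) k i * (G j k * v j) := Finset.sum_comm
          _ = ∑ j, (G^(T+1+1)) j i * v j := by
              apply Finset.sum_congr rfl
              intro j _
              rw [hpow2 j, Finset.sum_mul]
              exact Finset.sum_congr rfl (fun k _ => by ring)
      have hrem : ∑ k, (G^(T+1)) k i * v k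
          = w (T+1) i + q * ∑ j, (G^(T+1+1)) j i * v j := by
        calc ∑ k, (G^(T+1)) k i * v k
            = ∑ k, (G^(T+1)) k i * (1 + q * ∑ j, G j k * v j) :=
              Finset.sum_congr rfl (fun k _ => by rw [← hveq k])
          _ = (∑ k, (G^(T+1)) k i) + q * ∑ k, (G^(T+1)) k i * ∑ j, G j k * v j := by
              rw [Finset.mul_sum, ← Finset.sum_add_distrib]
              exact Finset.sum_congr rfl (fun k _ => by ring)
          _ = w (T+1) i + q * ∑ j, (G^(T+1+1)) j i * v j := by rw [hswap]
      rw [hrem, Finset.sum_range_succ (fun t => q^t * w t i) (T+1)]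
      ring
  -- the bound on partial sums
  set B : ℝ := (1 + q * ((n : ℝ) - 1)) / (1 - q^2) with hB
  have hSbound : ∀ T : ℕ, ∑ t ∈ Finset.range (T+1), q^t * w t i ≤ B := by
    intro T
    have := stmt_10_aux (n : ℝ) q hq0 hq1 (T+1) (fun t => w t i)
      (fun t => hw_nonneg t i) (fun t => hw_step t i)
    rw [hw0 i] at this
    calc ∑ t ∈ Finset.range (T+1), q^t * w t i
        ≤ (1 + q * ((n:ℝ) - 1)) / (1 - q^2) := this
      _ = B := hB.symm
  -- the remainder bound
  set C : ℝ := ∑ k, |v k| with hC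
  have hrem_bound : ∀ T : ℕ, q^(T+1) * ∑ k, (G^(T+1)) k i * v k ≤ q^(T+1) * C := by
    intro T
    apply mul_le_mul_of_nonneg_left _ (pow_nonneg hq0 _)
    rw [hC]
    apply Finset.sum_le_sum
    intro k _
    calc (G^(T+1)) k i * v k ≤ |(G^(T+1)) k i * v k| := le_abs_self _
      _ = (G^(T+1)) k i * |v k| := by rw [abs_mul, abs_of_nonneg ((hpow (T+1)).1 k i)]
      _ ≤ 1 * |v k| := mul_le_mul_of_nonneg_right (hpow_le (T+1) k i) (abs_nonneg _)
      _ = |v k| := one_mul _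
  have hkey : ∀ T : ℕ, v i ≤ B + q^(T+1) * C := by
    intro T
    rw [hexp T]
    have := hSbound T
    have := hrem_bound T
    linarith
  -- take the limit
  have hlim : Tendsto (fun T : ℕ => B + q^(T+1) * C) atTop (nhds B) := by
    have h1 : Tendsto (fun T : ℕ => q^(T+1)) atTop (nhds 0) := by
      have := (tendsto_pow_atTop_nhds_zero_of_lt_one hq0 hq1).comp
        (tendsto_add_atTop_nat 1)
      exact this
    have h2 : Tendsto (fun T : ℕ => q^(T+1) * C) atTop (nhds 0) := by
      simpa using h1.mul_const C
    simpa using (tendsto_const_nhds (x := B)).add h2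
  have hvB : v i ≤ B := ge_of_tendsto' hlim hkey
  -- conclude
  have hBeq : B = (1 + δ*(1 - α)*((n : ℝ) - 1)/(2*α)) / (1 - (δ*(1 - α)/(2*α))^2) := by
    rw [hB, hq]
    have h2α' : (2*α) ≠ 0 := ne_of_gt h2α
    field_simp
    try ring
  linarith [hvca, hBeq ▸ hvB]
end

section
/- For any row-stochastic matrix G and threshold t > 1, the number of agents i with centrality v_i > t is at most ⌊nδ(1-α) / ((t-1)(2α - δ(1-α)))⌋, where v = (I - δWᵀ)⁻¹𝟏 and W = ((1-α)/(2α))G. -/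
open Matrix BigOperators

/-- The number of agents with centrality above a threshold `t > 1` is at most
`⌊nδ(1-α) / ((t-1)(2α - δ(1-α)))⌋`. -/
theorem stmt_12 (n : ℕ) (α δ t : ℝ) (hα : 1/2 ≤ α) (hα1 : α < 1)
    (hδ0 : 0 ≤ δ) (hδ1 : δ < 1) (ht : 1 < t)
    (G : Matrix (Fin n) (Fin n) ℝ)
    (hG0 : ∀ i j, 0 ≤ G i j) (hG1 : ∀ i, ∑ j, G i j = 1)
    (W : Matrix (Fin n) (Fin n) ℝ) (hW : W = ((1 - α)/(2*α)) • G)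
    (v : Fin n → ℝ) (hv : v = (1 - δ • Wᵀ)⁻¹ *ᵥ (fun _ => 1)) :
    (Finset.univ.filter (fun i => t < v i)).card ≤
      ⌊(n : ℝ)*δ*(1 - α) / ((t - 1)*(2*α - δ*(1 - α)))⌋₊ := by
  have hα0 : (0:ℝ) < α := lt_of_lt_of_le (by norm_num) hα
  set r : ℝ := (1 - α)/(2*α) with hr
  have hr0 : 0 ≤ r := div_nonneg (by linarith) (by linarith)
  have hr1 : r ≤ 1 := by
    rw [div_le_one (by linarith)]; linarith
  have hδr : δ * r < 1 :=
    lt_of_le_of_lt (by nlinarith) hδ1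
  have hW0 : ∀ i j, 0 ≤ W i j := by
    intro i j; rw [hW]; exact mul_nonneg hr0 (hG0 i j)
  have hWsum : ∀ i, ∑ j, W i j = r := by
    intro i; rw [hW]; simp [← Finset.mul_sum, hG1 i]
  have hWle : ∀ i j, W i j ≤ r := by
    intro i j
    calc W i j ≤ ∑ k, W i k :=
      Finset.single_le_sum (fun k _ => hW0 i k) (Finset.mem_univ j)
    _ = r := hWsum i
  set M : Matrix (Fin n) (Fin n) ℝ := 1 - δ • Wᵀ with hM
  have hMapp : ∀ i j, M i j = (if i = j then (1:ℝ) else 0) - δ * W j i := by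
    intro i j
    simp [hM, Matrix.sub_apply, Matrix.one_apply, Matrix.smul_apply,
      Matrix.transpose_apply]
  have hdet : M.det ≠ 0 := by
    apply det_ne_zero_of_sum_col_lt_diag
    intro k
    have h1 : ∀ i ∈ Finset.univ.erase k, ‖M i k‖ = δ * W k i := by
      intro i hi
      have : i ≠ k := (Finset.mem_erase.mp hi).1
      rw [hMapp, if_neg this]
      simp [Real.norm_eq_abs, abs_mul, abs_of_nonneg hδ0, abs_of_nonneg (hW0 k i)]
    rw [Finset.sum_congr rfl h1]
    have h2 : ∑ i ∈ Finset.univ.erase k, δ * W k i = δ * (r - W k k) := by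
      rw [← Finset.mul_sum]
      congr 1
      rw [Finset.sum_erase_eq_sub (Finset.mem_univ k), hWsum]
    rw [h2, hMapp, if_pos rfl]
    have hkk : δ * W k k ≤ δ * r := mul_le_mul_of_nonneg_left (hWle k k) hδ0
    rw [Real.norm_eq_abs, abs_of_nonneg (by linarith)]
    nlinarith [mul_nonneg hδ0 (hW0 k k)]
  have hMv : M *ᵥ v = fun _ => 1 := by
    rw [hv, Matrix.mulVec_mulVec, Matrix.mul_nonsing_inv M (isUnit_iff_ne_zero.mpr hdet),
      Matrix.one_mulVec]
  have heq : ∀ i, v i = 1 + δ * ∑ j, W j i * v j := by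
    intro i
    have h := congrFun hMv i
    have hexp : (M *ᵥ v) i = v i - δ * ∑ j, W j i * v j := by
      simp only [Matrix.mulVec, dotProduct]
      have hterm : ∀ j, M i j * v j
          = (if i = j then v j else 0) - δ * (W j i * v j) := by
        intro j; rw [hMapp]; split <;> ring
      rw [Finset.sum_congr rfl (fun j _ => hterm j), Finset.sum_sub_distrib,
        Finset.sum_ite_eq Finset.univ i (fun j => v j), ← Finset.mul_sum]
      simp
    rw [hexp] at h
    linarith
  -- nonnegativity of v
  have hv0 : ∀ i, 0 ≤ v i := by
    by_contra hcon
    push_neg at hcon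
    set S := Finset.univ.filter (fun i => v i < 0) with hS
    have hSne : S.Nonempty := by
      obtain ⟨i, hi⟩ := hcon
      exact ⟨i, by simp [hS, hi]⟩
    set T := ∑ i ∈ S, v i with hT
    have hTneg : T < 0 := by
      apply Finset.sum_neg (fun i hi => (Finset.mem_filter.mp hi).2) hSne
    have key : T ≥ S.card + δ * (r * T) := by
      have h1 : T = S.card + δ * ∑ i ∈ S, ∑ j, W j i * v j := by
        rw [hT, Finset.sum_congr rfl (fun i _ => heq i)]
        rw [Finset.sum_add_distrib, ← Finset.mul_sum]
        simp
      have h2 : ∑ i ∈ S, ∑ j, W j i * v j = ∑ j, v j * ∑ i ∈ S, W j i := by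
        rw [Finset.sum_comm]
        apply Finset.sum_congr rfl
        intro j _
        rw [Finset.mul_sum]
        apply Finset.sum_congr rfl
        intro i _
        ring
      have h3 : ∀ j, v j * ∑ i ∈ S, W j i ≥ r * min (v j) 0 := by
        intro j
        have hc0 : 0 ≤ ∑ i ∈ S, W j i := Finset.sum_nonneg (fun i _ => hW0 j i)
        have hcr : ∑ i ∈ S, W j i ≤ r := by
          rw [← hWsum j]
          exact Finset.sum_le_sum_of_subset_of_nonneg (Finset.subset_univ S)
            (fun i _ _ => hW0 j i)
        rcases le_or_gt 0 (v j) with h | h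
        · rw [min_eq_right h]
          simpa using mul_nonneg h hc0
        · rw [min_eq_left h.le]
          nlinarith [mul_nonpos_of_nonneg_of_nonpos (sub_nonneg.mpr hcr) h.le]
      have h4 : ∑ j, min (v j) 0 = T := by
        rw [hT]
        rw [← Finset.sum_filter_add_sum_filter_not Finset.univ (fun i => v i < 0)
          (fun j => min (v j) 0)]
        have e1 : ∑ j ∈ Finset.univ.filter (fun i => v i < 0), min (v j) 0
            = ∑ j ∈ S, v j := by
          apply Finset.sum_congr rfl
          intro j hj
          exact min_eq_left (Finset.mem_filter.mp hj).2.le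
        have e2 : ∑ j ∈ Finset.univ.filter (fun i => ¬ v i < 0), min (v j) 0 = 0 := by
          apply Finset.sum_eq_zero
          intro j hj
          exact min_eq_right (not_lt.mp (Finset.mem_filter.mp hj).2)
        rw [e1, e2, add_zero]
      have h5 : ∑ i ∈ S, ∑ j, W j i * v j ≥ r * T := by
        rw [h2, ← h4, Finset.mul_sum]
        exact Finset.sum_le_sum (fun j _ => h3 j)
      have h6 := mul_le_mul_of_nonneg_left h5 hδ0
      linarith [h1, h6]
    have hcard : (1:ℝ) ≤ S.card := by
      exact_mod_cast Finset.card_pos.mpr hSne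
    nlinarith [mul_pos (by linarith : (0:ℝ) < 1 - δ*r) (by linarith : (0:ℝ) < -T)]
  have hv1 : ∀ i, 1 ≤ v i := by
    intro i
    rw [heq i]
    have : 0 ≤ ∑ j, W j i * v j :=
      Finset.sum_nonneg (fun j _ => mul_nonneg (hW0 j i) (hv0 j))
    nlinarith
  -- total sum
  have hsum : (1 - δ * r) * ∑ i, v i = n := by
    have h1 : ∑ i, v i = n + δ * ∑ i, ∑ j, W j i * v j := by
      rw [Finset.sum_congr rfl (fun i _ => heq i), Finset.sum_add_distrib,
        ← Finset.mul_sum]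
      simp
    have h2 : ∑ i, ∑ j, W j i * v j = r * ∑ j, v j := by
      rw [Finset.sum_comm, Finset.mul_sum]
      apply Finset.sum_congr rfl
      intro j _
      rw [← Finset.sum_mul, hWsum, mul_comm]
    rw [h2] at h1
    linarith [h1]
  -- counting
  set S' := Finset.univ.filter (fun i => t < v i) with hS'
  have hcount : (S'.card : ℝ) * (t - 1) ≤ ∑ i, (v i - 1) := by
    calc (S'.card : ℝ) * (t - 1) = ∑ _i ∈ S', (t - 1) := by
          rw [Finset.sum_const, nsmul_eq_mul]
      _ ≤ ∑ i ∈ S', (v i - 1) := by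
          apply Finset.sum_le_sum
          intro i hi
          have := (Finset.mem_filter.mp hi).2
          linarith
      _ ≤ ∑ i, (v i - 1) := by
          apply Finset.sum_le_sum_of_subset_of_nonneg (Finset.subset_univ S')
          intro i _ _
          linarith [hv1 i]
  have hsumv : ∑ i, (v i - 1) = (n : ℝ) * δ * r / (1 - δ * r) := by
    have hne : (1:ℝ) - δ * r ≠ 0 := by linarith
    have h1 : ∑ i, ((v i) - 1) = (∑ i, v i) - n := by
      rw [Finset.sum_sub_distrib]
      simp
    have h2 : ∑ i, v i = n / (1 - δ * r) := by
      rw [eq_div_iff hne]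
      linarith [hsum]
    rw [h1, h2]
    field_simp
    ring
  apply Nat.le_floor
  have hrw : (n : ℝ)*δ*(1 - α) / ((t - 1)*(2*α - δ*(1 - α)))
      = (n : ℝ) * δ * r / (1 - δ * r) / (t - 1) := by
    rw [hr]
    have h2α : (2*α) ≠ 0 := by positivity
    have hd1 : 2*α - δ*(1-α) > 0 := by nlinarith
    field_simp
  rw [hrw]
  rw [le_div_iff₀ (by linarith : (0:ℝ) < t - 1)]
  rw [← hsumv]
  exact hcount
end

section
/- Suppose v_l < v_c^a < v̄, where v_l, v̄, v_h are respectively the leaf centrality of the star graph, the balanced-graph centrality, and the star-center centrality. Then in the star graph exactly one agent has centrality above v_c^a, while in any balanced graph all n agents have centrality above v_c^a; hence the balanced graph's seeding capacity ‖S^max‖₁ exceeds the star graph's seeding capacity S^max_center whenever the demand capacities S^max_i are positive for at least two agents. -/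
open Matrix BigOperators

lemma inv_mulVec_eq' {m : Type*} [Fintype m] [DecidableEq m] (A : Matrix m m ℝ)
    (hA : A.det ≠ 0) (v b : m → ℝ) (h : A *ᵥ v = b) : A⁻¹ *ᵥ b = v := by
  rw [← h, Matrix.mulVec_mulVec, Matrix.nonsing_inv_mul A (Ne.isUnit hA), Matrix.one_mulVec]

lemma mulVec_entry' {m : Type*} [Fintype m] [DecidableEq m] (β : ℝ) (G : Matrix m m ℝ)
    (v : m → ℝ) (i : m) :
    ((1 - β • Gᵀ) *ᵥ v) i = v i - β * ∑ j, G j i * v j := by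
  simp [Matrix.mulVec, dotProduct, Matrix.sub_apply, Matrix.one_apply, sub_mul,
    Finset.sum_sub_distrib, ite_mul, Finset.mul_sum, mul_assoc]

lemma sum_ite_ne' {N : ℕ} (c : Fin N) (x : ℝ) :
    ∑ i : Fin N, (if i = c then (0:ℝ) else x) = ((N:ℝ) - 1) * x := by
  have h1 : ∑ i : Fin N, (if i = c then (0:ℝ) else x)
      = (∑ _i : Fin N, x) - ∑ i : Fin N, (if i = c then x else 0) := by
    rw [← Finset.sum_sub_distrib]
    apply Finset.sum_congr rfl
    intro i _; by_cases h : i = c <;> simp [h]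
  rw [h1, Finset.sum_ite_eq' Finset.univ c (fun _ => x), if_pos (Finset.mem_univ c)]
  simp [Finset.sum_const, Finset.card_univ]
  ring

lemma entry_apply' {m : Type*} [Fintype m] [DecidableEq m] (β : ℝ) (G : Matrix m m ℝ)
    (i j : m) : (1 - β • Gᵀ) i j = (if i = j then 1 else 0) - β * G j i := by
  simp [Matrix.sub_apply, Matrix.one_apply]

set_option maxHeartbeats 1000000

/-- When `v_l < v_c^a < v̄`, exactly the center can be seeded in the star graph,
all agents can be seeded in a balanced graph, and the balanced graph's seeding
capacity exceeds the star graph's one. -/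
theorem stmt_18 (n : ℕ) (hn : 2 ≤ n) (α δ : ℝ) (hα : 1/2 ≤ α) (hα1 : α < 1)
    (hδ0 : 0 < δ) (hδ1 : δ < 1)
    (vl vbar : ℝ)
    (hvl : vl = (1 + δ*(1 - α)/(2*α*((n : ℝ) - 1))) / (1 - (δ*(1 - α)/(2*α))^2))
    (hvbar : vbar = 2*α / (2*α - δ*(1 - α)))
    (vca : ℝ) (h1 : vl < vca) (h2 : vca < vbar)
    -- the star graph with center `c`
    (c : Fin n) (Gstar : Matrix (Fin n) (Fin n) ℝ)
    (hGstar : ∀ i j, Gstar i j =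
      if i = c then (if j = c then 0 else 1/((n : ℝ) - 1))
      else (if j = c then 1 else 0))
    (vstar : Fin n → ℝ)
    (hvstar : vstar = (1 - δ • (((1 - α)/(2*α)) • Gstar)ᵀ)⁻¹ *ᵥ (fun _ => 1))
    -- an arbitrary balanced (doubly stochastic) graph
    (Gbal : Matrix (Fin n) (Fin n) ℝ)
    (hGbal0 : ∀ i j, 0 ≤ Gbal i j) (hGbalr : ∀ i, ∑ j, Gbal i j = 1)
    (hGbalc : ∀ j, ∑ i, Gbal i j = 1)
    (vbal : Fin n → ℝ)
    (hvbal : vbal = (1 - δ • (((1 - α)/(2*α)) • Gbal)ᵀ)⁻¹ *ᵥ (fun _ => 1))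
    -- positive demand capacities
    (S : Fin n → ℝ) (hS : ∀ i, 0 < S i) :
    (∀ i, vca < vstar i ↔ i = c) ∧ (∀ i, vca < vbal i) ∧ S c < ∑ i, S i := by
  have hα0 : (0:ℝ) < α := by linarith
  set β : ℝ := δ * ((1 - α)/(2*α)) with hβdef
  have hβ0 : 0 < β := by
    apply mul_pos hδ0; apply div_pos <;> linarith
  have hβhalf : β < 1/2 := by
    rw [hβdef]
    have h1a : (1 - α)/(2*α) ≤ 1/2 := by
      rw [div_le_div_iff₀ (by linarith) (by norm_num)]; linarith
    nlinarith
  have hβ1 : β < 1 := by linarith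
  have hβsq : 0 < 1 - β^2 := by nlinarith
  have hn1 : (1:ℝ) ≤ (n:ℝ) - 1 := by
    have : (2:ℝ) ≤ (n:ℝ) := by exact_mod_cast hn
    linarith
  have hn1' : (n:ℝ) - 1 ≠ 0 := by linarith
  -- rewrite vl, vbar in terms of β
  set vh : ℝ := (1 + β*((n:ℝ)-1)) / (1 - β^2) with hvh
  have hvl' : vl = (1 + β/((n:ℝ)-1)) / (1 - β^2) := by
    rw [hvl, hβdef]
    have h2α : (2*α) ≠ 0 := by positivity
    field_simp
  have hvbar' : vbar = 1 / (1 - β) := by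
    rw [hvbar, hβdef]
    have hden : 2*α - δ*(1-α) ≠ 0 := by nlinarith
    have h2α : (2*α) ≠ 0 := by positivity
    field_simp
  have hvbarvh : vbar ≤ vh := by
    have hn2 : (2:ℝ) ≤ (n:ℝ) := by exact_mod_cast hn
    rw [hvbar', hvh, div_le_div_iff₀ (by linarith) hβsq]
    nlinarith [mul_nonneg (mul_nonneg hβ0.le (by linarith : (0:ℝ) ≤ 1 - β))
      (by linarith : (0:ℝ) ≤ (n:ℝ) - 2)]
  -- rewriting the matrices
  have hmatS : (1 - δ • (((1 - α)/(2*α)) • Gstar)ᵀ) = 1 - β • Gstarᵀ := by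
    rw [Matrix.transpose_smul, smul_smul]
  have hmatB : (1 - δ • (((1 - α)/(2*α)) • Gbal)ᵀ) = 1 - β • Gbalᵀ := by
    rw [Matrix.transpose_smul, smul_smul]
  -- star facts
  have hGstar_diag : ∀ k, Gstar k k = 0 := by
    intro k; rw [hGstar]; by_cases h : k = c <;> simp [h]
  have hGstar_nonneg : ∀ i j, 0 ≤ Gstar i j := by
    intro i j; rw [hGstar]
    have h0 : (0:ℝ) ≤ 1/((n:ℝ)-1) := (one_div_pos.mpr (by linarith)).le
    by_cases h : i = c <;> by_cases h' : j = c <;> simp [h, h'] <;> linarith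
  have hGstar_row : ∀ k, ∑ i, Gstar k i = 1 := by
    intro k
    by_cases hk : k = c
    · have hG : ∀ i, Gstar k i = if i = k then 0 else 1/((n:ℝ)-1) := by
        intro i; rw [hGstar, hk]; simp
      simp only [hG]
      rw [sum_ite_ne', mul_one_div, div_self hn1']
    · have hG : ∀ i, Gstar k i = if i = c then 1 else 0 := by
        intro i; rw [hGstar]; simp [hk]
      simp [hG]
  -- determinant of the star matrix
  have hdetS : (1 - β • Gstarᵀ).det ≠ 0 := by
    apply det_ne_zero_of_sum_col_lt_diag
    intro k
    have hdiag : (1 - β • Gstarᵀ) k k = 1 := by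
      rw [entry_apply', hGstar_diag]; simp
    rw [hdiag]
    have hsum : ∑ i ∈ Finset.univ.erase k, ‖(1 - β • Gstarᵀ) i k‖
        = β * ∑ i ∈ Finset.univ.erase k, Gstar k i := by
      rw [Finset.mul_sum]
      apply Finset.sum_congr rfl
      intro i hi
      have hik : i ≠ k := (Finset.mem_erase.mp hi).1
      rw [entry_apply', if_neg hik, zero_sub, norm_neg, Real.norm_eq_abs,
        abs_of_nonneg (mul_nonneg hβ0.le (hGstar_nonneg k i))]
    rw [hsum, Finset.sum_erase_eq_sub (Finset.mem_univ k), hGstar_row, hGstar_diag]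
    rw [sub_zero, mul_one, norm_one]
    exact hβ1
  -- candidate star centrality vector
  set w : Fin n → ℝ := fun i => if i = c then vh else vl with hw
  have hwc : w c = vh := by rw [hw]; simp
  have hwl : ∀ i, i ≠ c → w i = vl := by intro i h; rw [hw]; simp [h]
  have hAw : (1 - β • Gstarᵀ) *ᵥ w = (fun _ => 1) := by
    funext i
    rw [mulVec_entry']
    show w i - β * ∑ j, Gstar j i * w j = 1
    by_cases hi : i = c
    · rw [hi, hwc]
      have hGc : ∀ j, Gstar j c * w j = if j = c then 0 else vl := by
        intro j; rw [hGstar]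
        by_cases h : j = c
        · simp [h]
        · rw [if_neg h, if_pos rfl, one_mul, if_neg h, hwl j h]
      simp only [hGc]
      rw [sum_ite_ne', hvh, hvl']
      field_simp
      ring
    · rw [hwl i hi]
      have hGi : ∀ j, Gstar j i * w j = if j = c then (1/((n:ℝ)-1)) * vh else 0 := by
        intro j; rw [hGstar]
        by_cases h : j = c
        · rw [if_pos h, if_neg hi, if_pos h, h, hwc]
        · simp [h, hi]
      simp only [hGi]
      rw [Finset.sum_ite_eq' Finset.univ c, if_pos (Finset.mem_univ c), hvh, hvl']
      field_simp
      ring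
  have hvstar' : vstar = w := by
    rw [hvstar, hmatS]
    exact inv_mulVec_eq' _ hdetS _ _ hAw
  -- balanced part
  have hGbal_diag_le : ∀ k, Gbal k k ≤ 1 := by
    intro k
    calc Gbal k k ≤ ∑ i, Gbal i k :=
          Finset.single_le_sum (fun i _ => hGbal0 i k) (Finset.mem_univ k)
      _ = 1 := hGbalc k
  have hdetB : (1 - β • Gbalᵀ).det ≠ 0 := by
    apply det_ne_zero_of_sum_row_lt_diag
    intro k
    have hsum : ∑ j ∈ Finset.univ.erase k, ‖(1 - β • Gbalᵀ) k j‖ = β * ∑ j ∈ Finset.univ.erase k, Gbal j k := by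
      rw [Finset.mul_sum]
      apply Finset.sum_congr rfl
      intro j hj
      have hjk : j ≠ k := (Finset.mem_erase.mp hj).1
      rw [entry_apply', if_neg (fun h => hjk h.symm), zero_sub, norm_neg, Real.norm_eq_abs,
        abs_of_nonneg (by exact mul_nonneg hβ0.le (hGbal0 j k))]
    rw [hsum, Finset.sum_erase_eq_sub (Finset.mem_univ k), hGbalc]
    have hdiag : (1 - β • Gbalᵀ) k k = 1 - β * Gbal k k := by
      rw [entry_apply']; simp
    rw [hdiag, Real.norm_eq_abs, abs_of_nonneg]
    · nlinarith [hGbal0 k k, hGbal_diag_le k]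
    · nlinarith [hGbal0 k k, hGbal_diag_le k]
  have hAbw : (1 - β • Gbalᵀ) *ᵥ (fun _ => vbar) = (fun _ => 1) := by
    funext i
    rw [mulVec_entry']
    have : ∑ j, Gbal j i * vbar = vbar := by
      rw [← Finset.sum_mul, hGbalc, one_mul]
    rw [this, hvbar']
    have h1b : (1:ℝ) - β ≠ 0 := by linarith
    field_simp
  have hvbal' : vbal = fun _ => vbar := by
    rw [hvbal, hmatB]
    exact inv_mulVec_eq' _ hdetB _ _ hAbw
  -- conclude
  refine ⟨?_, ?_, ?_⟩
  · intro i
    simp only [hvstar', hw]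
    constructor
    · intro h
      by_contra hic
      rw [if_neg hic] at h
      exact absurd h (not_lt.mpr h1.le)
    · intro h
      rw [if_pos h]
      linarith
  · intro i
    rw [hvbal']
    exact h2
  · haveI : Nontrivial (Fin n) := Fin.nontrivial_iff_two_le.mpr hn
    obtain ⟨i0, hi0⟩ := exists_ne c
    have hpos : 0 < ∑ i ∈ Finset.univ.erase c, S i := by
      apply Finset.sum_pos (fun i _ => hS i)
      exact ⟨i0, Finset.mem_erase.mpr ⟨hi0, Finset.mem_univ i0⟩⟩
    have hsplit : ∑ i ∈ Finset.univ.erase c, S i + S c = ∑ i, S i :=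
      Finset.sum_erase_add Finset.univ S (Finset.mem_univ c)
    linarith
end
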